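/- Let G be a finite subgroup of GL(V), let H be a subgroup of G whose fixed subspace V^H has dimension 1, and let v be a nonzero vector spanning V^H. Let f₁ and f₂ be homogeneous G-invariant polynomial functions on V of the same degree with f₁(v) ≠ 0, and set λ = f₂(v)/f₁(v). Then every point of the G-orbit of v is a singular point of the hypersurface Z(f₂ − λ·f₁): for every g ∈ G, all partial derivatives of f₂ − λ·f₁ vanish at g·v. -/

import Mathlib

noncomputable section
open MvPolynomial Matrix


lemma pderiv_bind₁ {n : ℕ} (σf : Fin n → MvPolynomial (Fin n) ℂ)
    (f : MvPolynomial (Fin n) ℂ) (i : Fin n) :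
    pderiv i (bind₁ σf f) = ∑ j, bind₁ σf (pderiv j f) * pderiv i (σf j) := by
  induction f using MvPolynomial.induction_on with
  | C a => simp
  | add p q hp hq => simp [map_add, hp, hq, Finset.sum_add_distrib, add_mul]
  | mul_X p j₀ hp =>
    have hX : ∀ j : Fin n, pderiv j (X j₀ : MvPolynomial (Fin n) ℂ) =
        if j = j₀ then 1 else 0 := by
      intro j
      by_cases h : j = j₀
      · simp [h, pderiv_X_self]
      · simp [pderiv_X_of_ne (Ne.symm h), h]
    rw [_root_.map_mul, bind₁_X_right, pderiv_mul, hp]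
    have hR : ∀ j, bind₁ σf (pderiv j (p * X j₀)) =
        bind₁ σf (pderiv j p) * σf j₀ + (if j = j₀ then bind₁ σf p else 0) := by
      intro j
      rw [pderiv_mul, hX j, mul_ite, mul_one, mul_zero, map_add, _root_.map_mul,
        bind₁_X_right, apply_ite (bind₁ σf), map_zero]
    simp only [hR, add_mul, Finset.sum_add_distrib, ite_mul, zero_mul]
    rw [Finset.sum_ite_eq' Finset.univ j₀ (fun j => bind₁ σf p * pderiv i (σf j))]
    simp [Finset.sum_mul, mul_right_comm, mul_comm, mul_assoc, mul_left_comm, Finset.mul_sum]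

lemma euler_id {n e : ℕ} {f : MvPolynomial (Fin n) ℂ} (hf : f.IsHomogeneous e) :
    ∑ i, X i * pderiv i f = (e : ℂ) • f := by
  have key : ∀ s ∈ f.support, ∑ i, X i * pderiv i (monomial s (coeff s f)) =
      (e : ℂ) • monomial s (coeff s f) := by
    intro s hs
    have hdeg : (∑ i, s i) = e := by
      have := hf (mem_support_iff.mp hs)
      rw [← this]
      simp [Finsupp.weight, Finsupp.linearCombination, Finsupp.sum_fintype]
    have h1 : ∀ i : Fin n, X i * pderiv i (monomial s (coeff s f)) =
        monomial s (coeff s f * s i) := by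
      intro i
      rw [pderiv_monomial]
      by_cases h : s i = 0
      · simp [h]
      · rw [X, monomial_mul, one_mul]
        congr 1
        rw [add_tsub_cancel_of_le]
        exact Finsupp.single_le_iff.mpr (Nat.one_le_iff_ne_zero.mpr h)
    have h2 : (∑ i, ((s i : ℂ))) = (e : ℂ) := by exact_mod_cast congrArg (Nat.cast (R := ℂ)) hdeg
    simp only [h1]
    rw [← map_sum, ← Finset.mul_sum, h2, smul_monomial, smul_eq_mul, mul_comm]
  calc ∑ i, X i * pderiv i f
      = ∑ i, X i * pderiv i (∑ s ∈ f.support, monomial s (coeff s f)) := by rw [← f.as_sum]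
    _ = ∑ s ∈ f.support, ∑ i, X i * pderiv i (monomial s (coeff s f)) := by
        simp only [map_sum, Finset.mul_sum]; rw [Finset.sum_comm]
    _ = ∑ s ∈ f.support, (e : ℂ) • monomial s (coeff s f) := Finset.sum_congr rfl key
    _ = (e : ℂ) • f := by rw [← Finset.smul_sum, ← f.as_sum]

lemma grad_transform {n : ℕ} (A : Matrix (Fin n) (Fin n) ℂ) (F : MvPolynomial (Fin n) ℂ)
    (hinv : ∀ w, MvPolynomial.eval (A.mulVec w) F = MvPolynomial.eval w F)
    (w : Fin n → ℂ) (i : Fin n) :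
    MvPolynomial.eval w (pderiv i F)
      = ∑ j, A j i * MvPolynomial.eval (A.mulVec w) (pderiv j F) := by
  set σ : Fin n → MvPolynomial (Fin n) ℂ := fun j => ∑ k, C (A j k) * X k with hσ
  have heval : ∀ (g : MvPolynomial (Fin n) ℂ) (u : Fin n → ℂ),
      MvPolynomial.eval u (bind₁ σ g) = MvPolynomial.eval (A.mulVec u) g := by
    intro g u
    have h := eval₂Hom_bind₁ (RingHom.id ℂ) u σ g
    have h2 : (fun j => eval₂Hom (RingHom.id ℂ) u (σ j)) = A.mulVec u := by
      funext j
      simp [hσ, mulVec, dotProduct]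
    rw [h2] at h
    exact h
  have hbind : bind₁ σ F = F := MvPolynomial.funext fun x => by rw [heval, hinv]
  have hpd : ∀ j, pderiv i (σ j) = C (A j i) := by
    intro j
    rw [hσ]
    simp only [map_sum, pderiv_C_mul]
    have : ∀ k : Fin n, C (A j k) * pderiv i (X k : MvPolynomial (Fin n) ℂ) =
        if k = i then C (A j k) else 0 := by
      intro k
      by_cases h : k = i
      · simp [h, pderiv_X_self]
      · simp [pderiv_X_of_ne h, h]
    simp only [this]
    rw [Finset.sum_ite_eq' Finset.univ i (fun k => C (A j k))]
    simp
  conv_lhs => rw [← hbind]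
  rw [pderiv_bind₁]
  simp only [map_sum, _root_.map_mul, heval, hpd, eval_C]
  exact Finset.sum_congr rfl fun j _ => mul_comm _ _

/-- The subspace of vectors fixed by every element of a set of invertible matrices. -/
def fixedSpace {n : ℕ} (S : Set (GL (Fin n) ℂ)) : Submodule ℂ (Fin n → ℂ) where
  carrier := {v | ∀ g ∈ S, (g : Matrix (Fin n) (Fin n) ℂ).mulVec v = v}
  add_mem' := by
    intro a b ha hb g hg
    rw [Matrix.mulVec_add, ha g hg, hb g hg]
  zero_mem' := by
    intro g hg
    simp
  smul_mem' := by
    intro c a ha g hg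
    rw [Matrix.mulVec_smul, ha g hg]

theorem stmt_3 {n e : ℕ} (G H : Subgroup (GL (Fin n) ℂ)) (hG : Finite G) (hHG : H ≤ G)
    (hdim : Module.finrank ℂ (fixedSpace (H : Set (GL (Fin n) ℂ))) = 1)
    (v : Fin n → ℂ) (hv : v ∈ fixedSpace (H : Set (GL (Fin n) ℂ))) (hv0 : v ≠ 0)
    (f₁ f₂ : MvPolynomial (Fin n) ℂ)
    (hhom₁ : f₁.IsHomogeneous e) (hhom₂ : f₂.IsHomogeneous e)
    (hinv₁ : ∀ g ∈ G, ∀ w : Fin n → ℂ,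
      MvPolynomial.eval ((g : Matrix (Fin n) (Fin n) ℂ).mulVec w) f₁ = MvPolynomial.eval w f₁)
    (hinv₂ : ∀ g ∈ G, ∀ w : Fin n → ℂ,
      MvPolynomial.eval ((g : Matrix (Fin n) (Fin n) ℂ).mulVec w) f₂ = MvPolynomial.eval w f₂)
    (hf₁v : MvPolynomial.eval v f₁ ≠ 0) :
    ∀ g ∈ G, ∀ i,
      MvPolynomial.eval ((g : Matrix (Fin n) (Fin n) ℂ).mulVec v)
        (pderiv i (f₂ - (MvPolynomial.eval v f₂ / MvPolynomial.eval v f₁) • f₁)) = 0 := by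
  set lam : ℂ := MvPolynomial.eval v f₂ / MvPolynomial.eval v f₁ with hlam
  set F : MvPolynomial (Fin n) ℂ := f₂ - lam • f₁ with hFdef
  -- invariance of F
  have hFinv : ∀ g ∈ G, ∀ w : Fin n → ℂ,
      MvPolynomial.eval ((g : Matrix (Fin n) (Fin n) ℂ).mulVec w) F = MvPolynomial.eval w F := by
    intro g hg w
    simp only [hFdef, map_sub, smul_eq_C_mul, _root_.map_mul, eval_C,
      hinv₁ g hg w, hinv₂ g hg w]
  -- F vanishes at v
  have hFv : MvPolynomial.eval v F = 0 := by
    simp only [hFdef, map_sub, smul_eq_C_mul, _root_.map_mul, eval_C, hlam]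
    field_simp
    ring
  -- F homogeneous
  have hFhom : F.IsHomogeneous e := by
    refine hhom₂.sub ?_
    rw [smul_eq_C_mul]
    simpa using (isHomogeneous_C (Fin n) lam).mul hhom₁
  -- gradient at v
  set d : Fin n → ℂ := fun i => MvPolynomial.eval v (pderiv i F) with hd
  -- Euler: ⟨d, v⟩ = 0
  have hdv : ∑ i, d i * v i = 0 := by
    have h := congrArg (MvPolynomial.eval v) (euler_id hFhom)
    simp only [map_sum, _root_.map_mul, eval_X, smul_eq_C_mul, eval_C, hFv, mul_zero] at h
    rw [← h]
    exact Finset.sum_congr rfl fun i _ => mul_comm _ _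
  -- invariance of d under H (transposed)
  have hstepB : ∀ h ∈ H, ∀ j, (∑ i, d i * (h : Matrix (Fin n) (Fin n) ℂ) i j) = d j := by
    intro h hh j
    have hfix : (h : Matrix (Fin n) (Fin n) ℂ).mulVec v = v := hv h hh
    have := grad_transform (h : Matrix (Fin n) (Fin n) ℂ) F (fun w => hFinv h (hHG hh) w) v j
    rw [hfix] at this
    simp only [hd] at this ⊢
    rw [this]
    exact Finset.sum_congr rfl fun i _ => mul_comm _ _
  -- the linear functional w ↦ ⟨d, w⟩ is H-invariant
  set L : (Fin n → ℂ) → ℂ := fun w => ∑ i, d i * w i with hL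
  have hLh : ∀ h ∈ H, ∀ w : Fin n → ℂ,
      L ((h : Matrix (Fin n) (Fin n) ℂ).mulVec w) = L w := by
    intro h hh w
    simp only [hL, mulVec, dotProduct, Finset.mul_sum]
    rw [Finset.sum_comm]
    calc ∑ j, ∑ i, d i * ((h : Matrix (Fin n) (Fin n) ℂ) i j * w j)
        = ∑ j, (∑ i, d i * (h : Matrix (Fin n) (Fin n) ℂ) i j) * w j := by
          simp [Finset.sum_mul, mul_assoc]
      _ = ∑ j, d j * w j := by
          exact Finset.sum_congr rfl fun j _ => by rw [hstepB h hh j]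
  -- averaging over H
  haveI hHfin : Finite ↥H := Finite.Set.subset (G : Set (GL (Fin n) ℂ)) hHG
  haveI := Fintype.ofFinite ↥H
  have hL0 : ∀ w : Fin n → ℂ, L w = 0 := by
    intro w
    set pw : Fin n → ℂ :=
      ∑ h : ↥H, ((h : GL (Fin n) ℂ) : Matrix (Fin n) (Fin n) ℂ).mulVec w with hpw
    have hpmem : pw ∈ fixedSpace (H : Set (GL (Fin n) ℂ)) := by
      intro g' hg'
      have : (g' : Matrix (Fin n) (Fin n) ℂ).mulVec pw =
          ∑ h : ↥H, ((g' * (h : GL (Fin n) ℂ) : GL (Fin n) ℂ) :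
            Matrix (Fin n) (Fin n) ℂ).mulVec w := by
        rw [hpw]
        rw [show ((g' : Matrix (Fin n) (Fin n) ℂ).mulVec
            (∑ h : ↥H, ((h : GL (Fin n) ℂ) : Matrix (Fin n) (Fin n) ℂ).mulVec w))
          = ∑ h : ↥H, (g' : Matrix (Fin n) (Fin n) ℂ).mulVec
              (((h : GL (Fin n) ℂ) : Matrix (Fin n) (Fin n) ℂ).mulVec w) from
            map_sum (Matrix.mulVecLin (g' : Matrix (Fin n) (Fin n) ℂ)) _ _]
        exact Finset.sum_congr rfl fun h _ => by rw [mulVec_mulVec, Units.val_mul]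
      rw [this, hpw]
      exact Fintype.sum_equiv (Equiv.mulLeft (⟨g', hg'⟩ : ↥H)) _ _ (fun h => rfl)
    have hLp : L pw = (Fintype.card ↥H : ℂ) * L w := by
      simp only [hL, hpw, Finset.sum_apply, Finset.mul_sum]
      rw [Finset.sum_comm]
      simp only [← Finset.mul_sum]
      calc ∑ h : ↥H, ∑ i, d i *
            (((h : GL (Fin n) ℂ) : Matrix (Fin n) (Fin n) ℂ).mulVec w) i
          = ∑ h : ↥H, L ((( h : GL (Fin n) ℂ) : Matrix (Fin n) (Fin n) ℂ).mulVec w) := rfl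
        _ = ∑ _h : ↥H, L w := Finset.sum_congr rfl fun h _ => hLh h h.2 w
        _ = (Fintype.card ↥H : ℂ) * L w := by
            rw [Finset.sum_const, Finset.card_univ, nsmul_eq_mul]
    -- pw is a multiple of v
    obtain ⟨c, hc⟩ := (finrank_eq_one_iff_of_nonzero'
      (⟨v, hv⟩ : fixedSpace (H : Set (GL (Fin n) ℂ)))
      (by simpa using hv0)).mp hdim ⟨pw, hpmem⟩
    have hcv : c • v = pw := congrArg Subtype.val hc
    have hLpw0 : L pw = 0 := by
      rw [← hcv]
      simp only [hL, Pi.smul_apply, smul_eq_mul]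
      calc ∑ i, d i * (c * v i) = c * ∑ i, d i * v i := by
            rw [Finset.mul_sum]; exact Finset.sum_congr rfl fun i _ => by ring
        _ = 0 := by rw [hdv, mul_zero]
    have hcard : (Fintype.card ↥H : ℂ) ≠ 0 := by
      exact_mod_cast Fintype.card_ne_zero
    rw [hLp] at hLpw0
    exact (mul_eq_zero.mp hLpw0).resolve_left hcard
  have hd0 : ∀ i, d i = 0 := by
    intro i
    have := hL0 (Pi.single i 1)
    simpa [hL, Pi.single_apply, Finset.sum_ite_eq'] using this
  intro g hg i
  have hginv : (g⁻¹ : GL (Fin n) ℂ) ∈ G := G.inv_mem hg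
  have hkey := grad_transform ((g⁻¹ : GL (Fin n) ℂ) : Matrix (Fin n) (Fin n) ℂ) F
    (fun w => hFinv g⁻¹ hginv w) ((g : Matrix (Fin n) (Fin n) ℂ).mulVec v) i
  have hvv : ((g⁻¹ : GL (Fin n) ℂ) : Matrix (Fin n) (Fin n) ℂ).mulVec
      ((g : Matrix (Fin n) (Fin n) ℂ).mulVec v) = v := by
    rw [mulVec_mulVec, ← Units.val_mul, inv_mul_cancel]
    simp
  rw [hvv] at hkey
  rw [hkey]
  simp only [hd] at hd0
  simp [hd0]
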